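/- For every N > 1 there exists a Sidon set A ⊆ {1, …, N} with |A| ≥ c√N for an absolute constant c > 0, and every Sidon set A ⊆ {1, …, N} satisfies |A| ≤ C√N for an absolute constant C. -/

import Mathlib

/-- `A` is a Sidon set: `x + y = u + v` with all variables in `A` has only the
trivial solutions `{x, y} = {u, v}`. -/
def IsSidon (A : Set ℤ) : Prop :=
  ∀ x ∈ A, ∀ y ∈ A, ∀ u ∈ A, ∀ v ∈ A,
    x + y = u + v → (x = u ∧ y = v) ∨ (x = v ∧ y = u)

lemma divmod_key (p s1 r1 s2 r2 : ℕ) (h1 : r1 < 2*p) (h2 : r2 < 2*p)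
    (h : 2*p*s1 + r1 = 2*p*s2 + r2) : s1 = s2 ∧ r1 = r2 := by
  have hp : 0 < 2*p := by omega
  have e1 : (2*p*s1 + r1) / (2*p) = s1 := by
    rw [Nat.mul_add_div hp, Nat.div_eq_of_lt h1]; omega
  have e2 : (2*p*s2 + r2) / (2*p) = s2 := by
    rw [Nat.mul_add_div hp, Nat.div_eq_of_lt h2]; omega
  have hs : s1 = s2 := by rw [← e1, h, e2]
  subst hs
  exact ⟨rfl, by omega⟩

lemma zmod_key (p : ℕ) (hp : p.Prime) (hodd : 2 < p) (a b c d : ℕ)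
    (ha : a < p) (hb : b < p) (hc : c < p) (hd : d < p)
    (hS : a + b = c + d) (hQ : a^2 % p + b^2 % p = c^2 % p + d^2 % p) :
    (a = c ∧ b = d) ∨ (a = d ∧ b = c) := by
  haveI : Fact p.Prime := ⟨hp⟩
  haveI : NeZero p := ⟨by omega⟩
  have h2 : (2 : ZMod p) ≠ 0 := by
    intro h
    have : (p : ℕ) ∣ 2 := by
      have := (ZMod.natCast_eq_zero_iff 2 p).mp (by exact_mod_cast h)
      exact this
    have := Nat.le_of_dvd (by norm_num) this
    omega
  have hS' : (a : ZMod p) + b = c + d := by exact_mod_cast congrArg (Nat.cast : ℕ → ZMod p) hS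
  have hQ' : (a : ZMod p)^2 + (b : ZMod p)^2 = (c : ZMod p)^2 + (d : ZMod p)^2 := by
    have := congrArg (Nat.cast : ℕ → ZMod p) hQ
    push_cast [ZMod.natCast_mod] at this
    exact this
  have hsq : ((a:ZMod p) - b)^2 = ((c:ZMod p) - d)^2 := by
    linear_combination 2*hQ' - ((a:ZMod p)+b+c+d)*hS'
  have hfac : (((a:ZMod p)-b) - ((c:ZMod p)-d)) * (((a:ZMod p)-b) + ((c:ZMod p)-d)) = 0 := by
    linear_combination hsq
  have hinj : ∀ x y : ℕ, x < p → y < p → (x:ZMod p) = y → x = y := by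
    intro x y hx hy h
    have := congrArg ZMod.val h
    rwa [ZMod.val_cast_of_lt hx, ZMod.val_cast_of_lt hy] at this
  rcases mul_eq_zero.mp hfac with h | h
  · left
    have hac : (a : ZMod p) = c := by
      have h2a : 2*(a:ZMod p) = 2*c := by linear_combination h + hS'
      exact mul_left_cancel₀ h2 h2a
    have := hinj a c ha hc hac
    exact ⟨this, by omega⟩
  · right
    have had : (a : ZMod p) = d := by
      have h2a : 2*(a:ZMod p) = 2*d := by linear_combination h + hS'
      exact mul_left_cancel₀ h2 h2a
    have := hinj a d ha hd had
    exact ⟨this, by omega⟩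

lemma erdos_turan (p : ℕ) (hp : p.Prime) (hodd : 2 < p) :
    ∃ A : Finset ℤ, (↑A : Set ℤ) ⊆ Set.Icc (1:ℤ) (2*(p:ℤ)^2) ∧ IsSidon ↑A ∧ A.card = p := by
  have hp0 : 0 < p := by omega
  set f : ℕ → ℕ := fun i => 2*p*i + i^2 % p with hf
  have hmod : ∀ i : ℕ, i^2 % p < p := fun i => Nat.mod_lt _ hp0
  refine ⟨(Finset.range p).image (fun i => (f i : ℤ) + 1), ?_, ?_, ?_⟩
  · intro x hx
    simp only [Finset.coe_image, Set.mem_image, Finset.mem_coe, Finset.mem_range] at hx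
    obtain ⟨i, hi, rfl⟩ := hx
    have h2 : (f i : ℤ) + 1 ≤ 2*(p:ℤ)^2 := by
      have h3 : (f i : ℕ) + 1 ≤ 2*p^2 := by
        obtain ⟨q, rfl⟩ : ∃ q, p = q + 1 := ⟨p-1, by omega⟩
        have hr := hmod i
        simp only [hf]
        nlinarith [hr, hi]
      exact_mod_cast h3
    refine ⟨?_, h2⟩
    have : (0:ℤ) ≤ (f i : ℤ) := Int.natCast_nonneg _
    omega
  · intro x hx y hy u hu v hv hsum
    simp only [Finset.coe_image, Set.mem_image, Finset.mem_coe, Finset.mem_range] at hx hy hu hv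
    obtain ⟨a, ha, rfl⟩ := hx
    obtain ⟨b, hb, rfl⟩ := hy
    obtain ⟨c, hc, rfl⟩ := hu
    obtain ⟨d, hd, rfl⟩ := hv
    have hnat : f a + f b = f c + f d := by exact_mod_cast (by linarith [hsum] : (f a : ℤ) + f b = f c + f d)
    have heq : 2*p*(a+b) + (a^2 % p + b^2 % p) = 2*p*(c+d) + (c^2 % p + d^2 % p) := by
      simp only [hf] at hnat ⊢
      ring_nf at hnat ⊢
      omega
    obtain ⟨hS, hQ⟩ := divmod_key p (a+b) _ (c+d) _
      (by have := hmod a; have := hmod b; omega)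
      (by have := hmod c; have := hmod d; omega) heq
    rcases zmod_key p hp hodd a b c d ha hb hc hd hS hQ with ⟨h1, h2⟩ | ⟨h1, h2⟩
    · left; subst h1; subst h2; exact ⟨rfl, rfl⟩
    · right; subst h1; subst h2; exact ⟨rfl, rfl⟩
  · rw [Finset.card_image_of_injOn, Finset.card_range]
    intro i hi j hj hij
    simp only [Finset.mem_coe, Finset.mem_range] at hi hj
    have : f i = f j := by
      dsimp only at hij
      exact_mod_cast (by linarith [hij] : (f i : ℤ) = f j)
    exact (divmod_key p i _ j _ (by have := hmod i; omega) (by have := hmod j; omega) this).1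

lemma sidon_upper (N : ℕ) (hN : 1 < N) (A : Finset ℤ)
    (hA : ↑A ⊆ Set.Icc (1:ℤ) (N:ℤ)) (hSid : IsSidon ↑A) :
    (A.card : ℝ) ≤ 3 * Real.sqrt N := by
  have hmem : ∀ a ∈ A, (1:ℤ) ≤ a ∧ a ≤ N := by
    intro a ha
    exact Set.mem_Icc.mp (hA (Finset.mem_coe.mpr ha))
  have hcard : A.offDiag.card ≤ (Finset.Icc (1 - (N:ℤ)) ((N:ℤ) - 1)).card := by
    apply Finset.card_le_card_of_injOn (fun q => q.1 - q.2)
    · intro q hq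
      rw [Finset.mem_coe, Finset.mem_offDiag] at hq
      obtain ⟨h1, h2, _⟩ := hq
      have b1 := hmem _ h1
      have b2 := hmem _ h2
      simp only [Finset.coe_Icc, Set.mem_Icc]
      omega
    · intro q1 hq1 q2 hq2 heq
      simp only [Finset.mem_coe, Finset.mem_offDiag] at hq1 hq2
      obtain ⟨ha1, hb1, hne1⟩ := hq1
      obtain ⟨ha2, hb2, hne2⟩ := hq2
      simp only at heq
      have hsum : q1.1 + q2.2 = q2.1 + q1.2 := by linarith
      rcases hSid _ ha1 _ hb2 _ ha2 _ hb1 hsum with ⟨h1, h2⟩ | ⟨h1, h2⟩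
      · exact Prod.ext h1 h2.symm
      · exact absurd h1 hne1
  rw [Finset.offDiag_card, Int.card_Icc] at hcard
  have hIcc : ((N:ℤ) - 1 + 1 - (1 - (N:ℤ))).toNat = 2*N - 1 := by omega
  rw [hIcc] at hcard
  set k := A.card with hk
  have hk2 : k * k ≤ 2*N + k := by
    have := Nat.sub_le_iff_le_add.mp hcard
    have h2 : 2*N - 1 + k ≤ 2*N + k := by omega
    exact le_trans this h2
  have hkR : (k:ℝ) * k ≤ 2*N + k := by exact_mod_cast hk2
  have hs : Real.sqrt N ^ 2 = N := Real.sq_sqrt (by positivity)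
  have hs1 : (1:ℝ) ≤ Real.sqrt N := by
    rw [show (1:ℝ) = Real.sqrt 1 by simp]
    exact Real.sqrt_le_sqrt (by exact_mod_cast hN.le)
  nlinarith [hkR, hs, hs1, sq_nonneg ((k:ℝ) - 3*Real.sqrt N), Real.sqrt_nonneg (N:ℝ)]

/-- For every `N > 1` there is a Sidon set `A ⊆ {1, …, N}` with `|A| ≥ c √N`, and
every Sidon set in `{1, …, N}` has size at most `C √N`, for absolute constants. -/
theorem stmt7 :
    ∃ c C : ℝ, 0 < c ∧ 0 < C ∧ ∀ N : ℕ, 1 < N →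
      (∃ A : Finset ℤ, ↑A ⊆ Set.Icc (1 : ℤ) (N : ℤ) ∧ IsSidon ↑A ∧
        c * Real.sqrt N ≤ (A.card : ℝ)) ∧
      (∀ A : Finset ℤ, ↑A ⊆ Set.Icc (1 : ℤ) (N : ℤ) → IsSidon ↑A →
        (A.card : ℝ) ≤ C * Real.sqrt N) := by
  refine ⟨1/10, 3, by norm_num, by norm_num, fun N hN => ⟨?_, fun A hA hS => sidon_upper N hN A hA hS⟩⟩
  by_cases h400 : N ≤ 400
  · -- small N : use {1, 2}
    refine ⟨({1, 2} : Finset ℤ), ?_, ?_, ?_⟩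
    · intro x hx
      simp only [Finset.coe_insert, Finset.coe_singleton, Set.mem_insert_iff,
        Set.mem_singleton_iff] at hx
      have h2N : (2:ℤ) ≤ N := by exact_mod_cast hN
      rw [Set.mem_Icc]
      rcases hx with rfl | rfl <;> omega
    · intro x hx y hy u hu v hv hsum
      simp only [Finset.coe_insert, Finset.coe_singleton, Set.mem_insert_iff,
        Set.mem_singleton_iff] at hx hy hu hv
      rcases hx with rfl | rfl <;> rcases hy with rfl | rfl <;>
        rcases hu with rfl | rfl <;> rcases hv with rfl | rfl <;> omega
    · have hc : ({1, 2} : Finset ℤ).card = 2 := by decide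
      rw [hc]
      have h1 : Real.sqrt N ≤ 20 := by
        rw [show (20:ℝ) = Real.sqrt (20^2) from (Real.sqrt_sq (by norm_num)).symm]
        apply Real.sqrt_le_sqrt
        norm_num
        exact_mod_cast h400
      push_cast
      linarith
  · -- large N : Erdős–Turán construction
    push_neg at h400
    set m := Nat.sqrt (N / 8) with hm
    have hm7 : 7 ≤ m := Nat.le_sqrt.mpr (by omega)
    obtain ⟨p, hp, hmp, hp2m⟩ := Nat.exists_prime_lt_and_le_two_mul m (by omega)
    have hodd : 2 < p := by omega
    obtain ⟨A, hsub, hsid, hcard⟩ := erdos_turan p hp hodd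
    have hsq1 : m ^ 2 ≤ N / 8 := Nat.sqrt_le' _
    have hsq2 : N / 8 < (m + 1) ^ 2 := Nat.lt_succ_sqrt' _
    have hbound : 2 * p^2 ≤ N := by
      have h1 : p^2 ≤ 4 * m^2 := by nlinarith
      have h2 : 8 * (N / 8) ≤ N := by omega
      nlinarith
    refine ⟨A, ?_, hsid, ?_⟩
    · intro x hx
      have := hsub hx
      rw [Set.mem_Icc] at this ⊢
      have : 2*(p:ℤ)^2 ≤ (N:ℤ) := by exact_mod_cast hbound
      omega
    · rw [hcard]
      have hN100 : N ≤ 100 * p^2 := by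
        have h1 : N < 8 * (N / 8) + 8 := by omega
        have h2 : m + 1 ≤ p := by omega
        nlinarith
      have hR : (N:ℝ) ≤ ((10 * p : ℕ):ℝ)^2 := by
        exact_mod_cast (show N ≤ (10*p)^2 by nlinarith)
      have := Real.sqrt_le_sqrt hR
      rw [Real.sqrt_sq (by positivity)] at this
      push_cast at this
      linarith
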